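/- Let n = 2^m with m ≥ 1, let 0 < ε ≤ 1, let μ be a distribution over [n], and let α be an assignment of values in [0,1] to the internal nodes of the dyadic tree on [n] that is ε-fine with respect to μ. Then the reconstituted distribution μ̃ according to α is a distribution over [n] (∑_{i=1}^n μ̃(i) = 1) and μ̃ is 2ε-fine with respect to μ, i.e., there exists B ⊆ [n] with μ(B) ≤ 2ε such that (1−2ε)·μ(i) ≤ μ̃(i) ≤ (1+2ε)·μ(i) for every i ∈ [n]∖B. -/

import Mathlib

open Finset

lemma aux_div_eq_iff (i s v : ℕ) (hs : 0 < s) : i / s = v ↔ v * s ≤ i ∧ i < (v+1) * s := by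
  constructor
  · rintro rfl
    refine ⟨Nat.div_mul_le_self i s, ?_⟩
    rw [← Nat.div_lt_iff_lt_mul hs]; omega
  · rintro ⟨a,b⟩
    exact Nat.div_eq_of_lt_le a b

lemma aux_sum_two_mul (N : ℕ) (f : ℕ → ℝ) :
    ∑ v ∈ range (2*N), f v = ∑ t ∈ range N, (f (2*t) + f (2*t+1)) := by
  induction N with
  | zero => simp
  | succ N ih =>
    have h : 2 * (N+1) = (2*N + 1) + 1 := by ring
    rw [h, Finset.sum_range_succ, Finset.sum_range_succ, ih, Finset.sum_range_succ]
    ring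

lemma aux_hdiv (t b s : ℕ) (hb : b < 2) : (2*t+b) / 2^(s+1) = t / 2^s := by
  rw [pow_succ', ← Nat.div_div_eq_div_mul]
  congr 1
  omega

lemma aux_recon_sum (α : ℕ → ℕ → ℝ) (k : ℕ) :
    ∑ v ∈ range (2^k), ∏ l ∈ range k,
      (if (v / 2^(k-(l+1))) % 2 = 0 then α l (v/2^(k-l)) else 1 - α l (v/2^(k-l))) = 1 := by
  induction k with
  | zero => simp
  | succ k ih =>
    have h2 : 2^(k+1) = 2 * 2^k := by ring
    rw [h2, aux_sum_two_mul]
    have key : ∀ t ∈ range (2^k),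
        ((∏ l ∈ range (k+1), (if ((2*t) / 2^(k+1-(l+1))) % 2 = 0 then α l ((2*t)/2^(k+1-l)) else 1 - α l ((2*t)/2^(k+1-l))))
        + (∏ l ∈ range (k+1), (if ((2*t+1) / 2^(k+1-(l+1))) % 2 = 0 then α l ((2*t+1)/2^(k+1-l)) else 1 - α l ((2*t+1)/2^(k+1-l)))))
        = ∏ l ∈ range k, (if (t / 2^(k-(l+1))) % 2 = 0 then α l (t/2^(k-l)) else 1 - α l (t/2^(k-l))) := by
      intro t _
      have hA0 : ∀ l ∈ range k,
          (if ((2*t) / 2^(k+1-(l+1))) % 2 = 0 then α l ((2*t)/2^(k+1-l)) else 1 - α l ((2*t)/2^(k+1-l)))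
          = (if (t / 2^(k-(l+1))) % 2 = 0 then α l (t/2^(k-l)) else 1 - α l (t/2^(k-l))) := by
        intro l hl
        rw [mem_range] at hl
        have h1 : k+1-(l+1) = (k-(l+1))+1 := by omega
        have h2 : k+1-l = (k-l)+1 := by omega
        have e1 : 2*t = 2*t+0 := by omega
        rw [h1, h2, e1, aux_hdiv t 0 _ (by omega), aux_hdiv t 0 _ (by omega)]
      have hA1 : ∀ l ∈ range k,
          (if ((2*t+1) / 2^(k+1-(l+1))) % 2 = 0 then α l ((2*t+1)/2^(k+1-l)) else 1 - α l ((2*t+1)/2^(k+1-l)))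
          = (if (t / 2^(k-(l+1))) % 2 = 0 then α l (t/2^(k-l)) else 1 - α l (t/2^(k-l))) := by
        intro l hl
        rw [mem_range] at hl
        have h1 : k+1-(l+1) = (k-(l+1))+1 := by omega
        have h2 : k+1-l = (k-l)+1 := by omega
        rw [h1, h2, aux_hdiv t 1 _ (by omega), aux_hdiv t 1 _ (by omega)]
      rw [Finset.prod_range_succ, Finset.prod_range_succ,
        Finset.prod_congr rfl hA0, Finset.prod_congr rfl hA1]
      have e0 : k+1-(k+1) = 0 := by omega
      have e1 : k+1-k = 1 := by omega
      have d0 : (2*t) / 2^0 % 2 = 0 := by simp [Nat.mul_mod_right]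
      have d1 : (2*t+1) / 2^0 % 2 = 1 := by simp [Nat.add_mul_mod_self_left]
      have n0 : (2*t) / 2^1 = t := by omega
      have n1 : (2*t+1) / 2^1 = t := by omega
      rw [e0, e1, d0, d1, n0, n1]
      simp
      ring
    rw [Finset.sum_congr rfl key, ih]

set_option maxHeartbeats 1000000 in
/-- Let `n = 2^m`, `μ` a distribution over `[n]` (indexed here by
`Fin n`, so leaf `i : Fin n` is the `(i+1)`-st element), and `α` an `ε`-fine
assignment of values in `[0,1]` to the internal nodes `(l,t)` (`l < m`, `t < 2^l`) of
the dyadic tree. Then the reconstituted distribution `μ̃` sums to `1` and is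
`2ε`-fine with respect to `μ`. At level `l`, the node on the root-to-leaf path of `i`
is `(l, i / 2^(m-l))`, and `i` lies in its left child iff `i / 2^(m-l-1)` is even. -/
theorem stmt_10 (m : ℕ) (hm : 1 ≤ m) (n : ℕ) (hn : n = 2 ^ m)
    (ε : ℝ) (hε : 0 < ε) (hε1 : ε ≤ 1)
    (μ : Fin n → ℝ) (hμ0 : ∀ i, 0 ≤ μ i) (hμ1 : ∑ i, μ i = 1)
    (α : ℕ → ℕ → ℝ) (hα0 : ∀ l t, 0 ≤ α l t) (hα1 : ∀ l t, α l t ≤ 1)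
    (μL μR : ℕ → ℕ → ℝ)
    (hμL : ∀ l t, μL l t = ∑ i ∈ univ.filter (fun i : Fin n =>
        2 * t * 2 ^ (m - (l + 1)) ≤ (i : ℕ) ∧ (i : ℕ) < (2 * t + 1) * 2 ^ (m - (l + 1))), μ i)
    (hμR : ∀ l t, μR l t = ∑ i ∈ univ.filter (fun i : Fin n =>
        (2 * t + 1) * 2 ^ (m - (l + 1)) ≤ (i : ℕ) ∧ (i : ℕ) < (2 * t + 2) * 2 ^ (m - (l + 1))), μ i)
    (hfine : ∀ l t, l < m → t < 2 ^ l → 0 < μL l t + μR l t →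
      |α l t - μL l t / (μL l t + μR l t)| ≤ (ε / (2 * m)) ^ 2)
    (μt : Fin n → ℝ)
    (hμt : ∀ i : Fin n, μt i = ∏ l ∈ range m,
      (if ((i : ℕ) / 2 ^ (m - (l + 1))) % 2 = 0
        then α l ((i : ℕ) / 2 ^ (m - l))
        else 1 - α l ((i : ℕ) / 2 ^ (m - l)))) :
    (∑ i, μt i = 1) ∧
    ∃ B : Finset (Fin n), (∑ i ∈ B, μ i) ≤ 2 * ε ∧
      ∀ i ∉ B, (1 - 2 * ε) * μ i ≤ μt i ∧ μt i ≤ (1 + 2 * ε) * μ i := by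
  classical
  subst hn
  -- basic quantities
  set η : ℝ := ε / (2*m) with hηdef
  have hmR : (1:ℝ) ≤ (m:ℝ) := by exact_mod_cast hm
  have hηpos : 0 < η := by
    apply div_pos hε; positivity
  have hmη : (m:ℝ) * η = ε / 2 := by
    rw [hηdef]; field_simp
  have hη1 : η ≤ 1/2 := by
    rw [hηdef, div_le_iff₀ (by positivity)]
    nlinarith
  -- interval sums
  set F : ℕ → ℕ → ℝ := fun a b =>
    ∑ i ∈ univ.filter (fun i : Fin (2^m) => a ≤ (i:ℕ) ∧ (i:ℕ) < b), μ i with hFdef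
  have hFnonneg : ∀ a b, 0 ≤ F a b := fun a b => Finset.sum_nonneg (fun i _ => hμ0 i)
  have hFsplit : ∀ a b c : ℕ, a ≤ b → b ≤ c → F a c = F a b + F b c := by
    intro a b c hab hbc
    simp only [hFdef]
    have hun : (univ.filter (fun i : Fin (2^m) => a ≤ (i:ℕ) ∧ (i:ℕ) < c)) =
        (univ.filter (fun i : Fin (2^m) => a ≤ (i:ℕ) ∧ (i:ℕ) < b)) ∪
        (univ.filter (fun i : Fin (2^m) => b ≤ (i:ℕ) ∧ (i:ℕ) < c)) := by
      ext i; simp only [mem_filter, mem_union, mem_univ, true_and]; omega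
    rw [hun, Finset.sum_union]
    rw [Finset.disjoint_left]
    intro i hi hj
    simp only [mem_filter, mem_univ, true_and] at hi hj
    omega
  have hFfull : ∀ b, 2^m ≤ b → F 0 b = 1 := by
    intro b hb
    simp only [hFdef]
    rw [Finset.filter_true_of_mem (fun i _ => ⟨Nat.zero_le _, lt_of_lt_of_le i.isLt hb⟩)]
    exact hμ1
  -- node masses
  set ν : ℕ → ℕ → ℝ := fun l t => F (t * 2^(m-l)) ((t+1) * 2^(m-l)) with hνdef
  have hνnonneg : ∀ l t, 0 ≤ ν l t := fun l t => hFnonneg _ _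
  have hν00 : ν 0 0 = 1 := by
    simp only [hνdef, Nat.sub_zero, zero_mul, zero_add, one_mul]
    exact hFfull _ le_rfl
  have hνleaf : ∀ i : Fin (2^m), ν m (i:ℕ) = μ i := by
    intro i
    simp only [hνdef, hFdef, Nat.sub_self, pow_zero, mul_one]
    have : (univ.filter (fun j : Fin (2^m) => (i:ℕ) ≤ (j:ℕ) ∧ (j:ℕ) < (i:ℕ)+1)) = {i} := by
      ext j
      simp only [mem_filter, mem_univ, true_and, mem_singleton, Fin.ext_iff]
      omega
    rw [this, Finset.sum_singleton]
  have hνsplit : ∀ l t, l < m → ν l t = ν (l+1) (2*t) + ν (l+1) (2*t+1) := by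
    intro l t hl
    simp only [hνdef]
    have e : m - l = (m-(l+1)) + 1 := by omega
    have e1 : t * 2^(m-l) = 2*t * 2^(m-(l+1)) := by rw [e, pow_succ]; ring
    have e2 : (t+1) * 2^(m-l) = (2*t+1+1) * 2^(m-(l+1)) := by rw [e, pow_succ]; ring
    rw [e1, e2, hFsplit _ ((2*t+1) * 2^(m-(l+1))) _ (by gcongr; omega) (by gcongr; omega)]
  have hμLν : ∀ l t, μL l t = ν (l+1) (2*t) := by
    intro l t
    simp only [hνdef, hFdef, hμL]
  have hμRν : ∀ l t, μR l t = ν (l+1) (2*t+1) := by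
    intro l t
    simp only [hνdef, hFdef, hμR]
  have hlevel : ∀ l, l ≤ m → ∑ t ∈ range (2^l), ν l t = 1 := by
    intro l
    induction l with
    | zero => intro _; simpa using hν00
    | succ l ih =>
      intro h
      have hl : l < m := h
      have h2 : 2^(l+1) = 2*2^l := by ring
      rw [h2, aux_sum_two_mul]
      rw [Finset.sum_congr rfl (fun t _ => (hνsplit l t hl).symm)]
      exact ih hl.le
  have hfiber : ∀ l, l < m → ∀ v,
      ∑ i ∈ univ.filter (fun i : Fin (2^m) => (i:ℕ) / 2^(m-(l+1)) = v), μ i = ν (l+1) v := by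
    intro l hl v
    simp only [hνdef, hFdef]
    apply Finset.sum_congr _ (fun _ _ => rfl)
    apply Finset.filter_congr
    intro i _
    rw [aux_div_eq_iff _ _ _ (pow_pos (by norm_num : (0:ℕ) < 2) _)]
  have hTsucc : ∀ (j l : ℕ), l < m → j / 2^(m-l) = (j / 2^(m-(l+1))) / 2 := by
    intro j l hl
    have e : m - l = (m-(l+1)) + 1 := by omega
    rw [e, pow_succ, ← Nat.div_div_eq_div_mul]
  have hT0 : ∀ i : Fin (2^m), (i:ℕ) / 2^(m-0) = 0 := by
    intro i
    simp only [Nat.sub_zero]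
    exact Nat.div_eq_of_lt i.isLt
  have hTlt : ∀ i : Fin (2^m), ∀ l, l ≤ m → (i:ℕ) / 2^(m-l) < 2^l := by
    intro i l hl
    rw [Nat.div_lt_iff_lt_mul (pow_pos (by norm_num : (0:ℕ) < 2) _)]
    have h : 2^l * 2^(m-l) = 2^m := by rw [← pow_add]; congr 1; omega
    rw [mul_comm] at h ⊢
    rw [h]
    exact i.isLt
  -- the bad set
  set B : Finset (Fin (2^m)) := univ.filter (fun i : Fin (2^m) =>
    ∃ l < m, ν (l+1) ((i:ℕ)/2^(m-(l+1))) < η * ν l ((i:ℕ)/2^(m-l))) with hBdef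
  -- per-level bad mass
  have hBl : ∀ l, l < m →
      ∑ i ∈ univ.filter (fun i : Fin (2^m) =>
        ν (l+1) ((i:ℕ)/2^(m-(l+1))) < η * ν l ((i:ℕ)/2^(m-l))), μ i ≤ 2*η := by
    intro l hl
    set Q : ℕ → Prop := fun v => ν (l+1) v < η * ν l (v/2) with hQdef
    have hcond : ∀ i : Fin (2^m),
        (ν (l+1) ((i:ℕ)/2^(m-(l+1))) < η * ν l ((i:ℕ)/2^(m-l))) ↔ Q ((i:ℕ)/2^(m-(l+1))) := by
      intro i
      rw [hQdef, hTsucc _ l hl]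
    have hgmem : ∀ i : Fin (2^m), i ∈ univ → (i:ℕ)/2^(m-(l+1)) ∈ range (2^(l+1)) := by
      intro i _
      rw [mem_range]
      exact hTlt i (l+1) hl
    calc ∑ i ∈ univ.filter (fun i : Fin (2^m) =>
          ν (l+1) ((i:ℕ)/2^(m-(l+1))) < η * ν l ((i:ℕ)/2^(m-l))), μ i
        = ∑ i : Fin (2^m), (if Q ((i:ℕ)/2^(m-(l+1))) then μ i else 0) := by
          rw [Finset.filter_congr (fun i _ => by rw [hcond i]), Finset.sum_filter]
      _ = ∑ v ∈ range (2^(l+1)), ∑ i ∈ univ.filter (fun i : Fin (2^m) => (i:ℕ)/2^(m-(l+1)) = v),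
            (if Q ((i:ℕ)/2^(m-(l+1))) then μ i else 0) := by
          rw [Finset.sum_fiberwise_of_maps_to hgmem]
      _ = ∑ v ∈ range (2^(l+1)), (if Q v then ν (l+1) v else 0) := by
          refine Finset.sum_congr rfl (fun v _ => ?_)
          rw [Finset.sum_congr rfl (fun i hi => by
            rw [(Finset.mem_filter.mp hi).2])]
          by_cases hQ : Q v
          · rw [if_pos hQ, Finset.sum_congr rfl (fun i _ => if_pos hQ)]
            exact hfiber l hl v
          · simp [hQ]
      _ ≤ ∑ v ∈ range (2^(l+1)), η * ν l (v/2) := by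
          refine Finset.sum_le_sum (fun v _ => ?_)
          by_cases hQ : Q v
          · rw [if_pos hQ]; exact (hQdef ▸ hQ).le
          · rw [if_neg hQ]; exact mul_nonneg hηpos.le (hνnonneg _ _)
      _ = 2*η := by
          have h2 : 2^(l+1) = 2*2^l := by ring
          rw [h2, aux_sum_two_mul]
          have : ∀ t ∈ range (2^l), η * ν l (2*t/2) + η * ν l ((2*t+1)/2) = 2*η*ν l t := by
            intro t _
            have d0 : 2*t/2 = t := by omega
            have d1 : (2*t+1)/2 = t := by omega
            rw [d0, d1]; ring
          rw [Finset.sum_congr rfl this, ← Finset.mul_sum, hlevel l hl.le, mul_one]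
  have hB : ∑ i ∈ B, μ i ≤ 2*ε := by
    have step1 : ∀ i ∈ B, μ i ≤ ∑ l ∈ range m,
        (if ν (l+1) ((i:ℕ)/2^(m-(l+1))) < η * ν l ((i:ℕ)/2^(m-l)) then μ i else 0) := by
      intro i hi
      rw [hBdef, mem_filter] at hi
      obtain ⟨l, hlm, hQ⟩ := hi.2
      have h := Finset.single_le_sum (f := fun l => if ν (l+1) ((i:ℕ)/2^(m-(l+1))) < η * ν l ((i:ℕ)/2^(m-l)) then μ i else 0)
        (fun l _ => by split; exacts [hμ0 i, le_rfl]) (mem_range.mpr hlm)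
      simpa [if_pos hQ] using h
    calc ∑ i ∈ B, μ i
        ≤ ∑ i ∈ B, ∑ l ∈ range m,
          (if ν (l+1) ((i:ℕ)/2^(m-(l+1))) < η * ν l ((i:ℕ)/2^(m-l)) then μ i else 0) :=
          Finset.sum_le_sum step1
      _ ≤ ∑ i : Fin (2^m), ∑ l ∈ range m,
          (if ν (l+1) ((i:ℕ)/2^(m-(l+1))) < η * ν l ((i:ℕ)/2^(m-l)) then μ i else 0) := by
          refine Finset.sum_le_sum_of_subset_of_nonneg (Finset.subset_univ B) (fun i _ _ => ?_)
          refine Finset.sum_nonneg (fun l _ => ?_)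
          split; exacts [hμ0 i, le_rfl]
      _ = ∑ l ∈ range m, ∑ i : Fin (2^m),
          (if ν (l+1) ((i:ℕ)/2^(m-(l+1))) < η * ν l ((i:ℕ)/2^(m-l)) then μ i else 0) :=
          Finset.sum_comm
      _ ≤ ∑ l ∈ range m, 2*η := by
          refine Finset.sum_le_sum (fun l hl => ?_)
          rw [← Finset.sum_filter]
          exact hBl l (mem_range.mp hl)
      _ = (m:ℝ) * (2*η) := by
          rw [Finset.sum_const, card_range, nsmul_eq_mul]
      _ ≤ 2*ε := by nlinarith
  -- good leaves
  have hgood : ∀ i : Fin (2^m), i ∉ B →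
      (1 - 2*ε) * μ i ≤ μt i ∧ μt i ≤ (1 + 2*ε) * μ i := by
    intro i hiB
    have hno : ∀ l, l < m → η * ν l ((i:ℕ)/2^(m-l)) ≤ ν (l+1) ((i:ℕ)/2^(m-(l+1))) := by
      intro l hl
      by_contra hcon
      push_neg at hcon
      exact hiB (hBdef ▸ mem_filter.mpr ⟨mem_univ i, l, hl, hcon⟩)
    have hpos : ∀ l, l ≤ m → η^l ≤ ν l ((i:ℕ)/2^(m-l)) := by
      intro l
      induction l with
      | zero => intro _; rw [pow_zero, hT0 i, hν00]
      | succ l ih =>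
        intro h
        have hl : l < m := h
        calc η^(l+1) = η * η^l := by ring
          _ ≤ η * ν l ((i:ℕ)/2^(m-l)) := by
              exact mul_le_mul_of_nonneg_left (ih hl.le) hηpos.le
          _ ≤ ν (l+1) ((i:ℕ)/2^(m-(l+1))) := hno l hl
    have hposν : ∀ l, l ≤ m → 0 < ν l ((i:ℕ)/2^(m-l)) :=
      fun l hl => lt_of_lt_of_le (pow_pos hηpos l) (hpos l hl)
    have hfac : ∀ l, l < m →
        (1-η) * (ν (l+1) ((i:ℕ)/2^(m-(l+1))) / ν l ((i:ℕ)/2^(m-l))) ≤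
          (if ((i:ℕ)/2^(m-(l+1))) % 2 = 0 then α l ((i:ℕ)/2^(m-l)) else 1 - α l ((i:ℕ)/2^(m-l)))
        ∧ (if ((i:ℕ)/2^(m-(l+1))) % 2 = 0 then α l ((i:ℕ)/2^(m-l)) else 1 - α l ((i:ℕ)/2^(m-l)))
          ≤ (1+η) * (ν (l+1) ((i:ℕ)/2^(m-(l+1))) / ν l ((i:ℕ)/2^(m-l))) := by
      intro l hl
      have htv : (i:ℕ)/2^(m-l) = ((i:ℕ)/2^(m-(l+1))) / 2 := hTsucc _ l hl
      set t := (i:ℕ)/2^(m-l) with htdef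
      set v := (i:ℕ)/2^(m-(l+1)) with hvdef
      have hνl : ν l t = μL l t + μR l t := by rw [hμLν, hμRν, hνsplit l t hl]
      have hνlpos : 0 < ν l t := hposν l hl.le
      have hνvnn : 0 ≤ ν (l+1) v := hνnonneg _ _
      have hfine' : |α l t - μL l t / ν l t| ≤ η^2 := by
        rw [hνl]
        exact hfine l t hl (hTlt i l hl.le) (hνl ▸ hνlpos)
      have hq_lb : η ≤ ν (l+1) v / ν l t := by
        rw [le_div_iff₀ hνlpos]
        exact hno l hl
      have hkey : |(if v % 2 = 0 then α l t else 1 - α l t) - ν (l+1) v / ν l t| ≤ η^2 := by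
        by_cases hv : v % 2 = 0
        · have hveq : v = 2*t := by omega
          rw [if_pos hv, hveq, ← hμLν]
          exact hfine'
        · have hveq : v = 2*t+1 := by omega
          rw [if_neg hv, hveq, ← hμRν]
          have hRL : μR l t / ν l t = 1 - μL l t / ν l t := by
            field_simp
            linarith [hνl]
          rw [hRL, show (1 - α l t - (1 - μL l t / ν l t)) = -(α l t - μL l t / ν l t) by ring,
            abs_neg]
          exact hfine'
      have habs := abs_le.mp hkey
      constructor
      · nlinarith [habs.1, habs.2, hq_lb, hηpos]
      · nlinarith [habs.1, habs.2, hq_lb, hηpos]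
    have htel : ∀ k, k ≤ m →
        ∏ l ∈ range k, (ν (l+1) ((i:ℕ)/2^(m-(l+1))) / ν l ((i:ℕ)/2^(m-l))) = ν k ((i:ℕ)/2^(m-k)) := by
      intro k
      induction k with
      | zero => intro _; rw [Finset.prod_range_zero, hT0 i, hν00]
      | succ k ih =>
        intro h
        have hk : k < m := h
        rw [Finset.prod_range_succ, ih hk.le, mul_div_cancel₀]
        exact (hposν k hk.le).ne'
    have hμi : μ i = ∏ l ∈ range m, (ν (l+1) ((i:ℕ)/2^(m-(l+1))) / ν l ((i:ℕ)/2^(m-l))) := by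
      rw [htel m le_rfl, Nat.sub_self, pow_zero, Nat.div_one, hνleaf i]
    have hqnn : ∀ l ∈ range m, 0 ≤ ν (l+1) ((i:ℕ)/2^(m-(l+1))) / ν l ((i:ℕ)/2^(m-l)) :=
      fun l hl => div_nonneg (hνnonneg _ _) (hνnonneg _ _)
    have hμinn : 0 ≤ μ i := hμ0 i
    have hlow : (1-η)^m * μ i ≤ μt i := by
      rw [hμt i, hμi, show (1-η)^m = ∏ _l ∈ range m, (1-η) by
        rw [Finset.prod_const, card_range], ← Finset.prod_mul_distrib]
      refine Finset.prod_le_prod (fun l hl => ?_) (fun l hl => (hfac l (mem_range.mp hl)).1)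
      exact mul_nonneg (by linarith) (hqnn l hl)
    have hhigh : μt i ≤ (1+η)^m * μ i := by
      rw [hμt i, hμi, show (1+η)^m = ∏ _l ∈ range m, (1+η) by
        rw [Finset.prod_const, card_range], ← Finset.prod_mul_distrib]
      refine Finset.prod_le_prod (fun l hl => ?_) (fun l hl => (hfac l (mem_range.mp hl)).2)
      split
      · exact hα0 _ _
      · linarith [hα1 l ((i:ℕ)/2^(m-l))]
    have hbern : 1 - ε/2 ≤ (1-η)^m := by
      have h := one_add_mul_le_pow (a := -η) (by linarith) m
      rw [show (1:ℝ) + -η = 1 - η by ring] at h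
      calc (1:ℝ) - ε/2 = 1 + (m:ℝ) * (-η) := by rw [mul_neg, hmη]; ring
        _ ≤ (1-η)^m := h
    have hhalf : (0:ℝ) < 1 - ε/2 := by linarith
    have hupper : (1+η)^m ≤ 1 + 2*ε := by
      have h1 : (1+η)^m * (1-η)^m = (1-η^2)^m := by
        rw [← mul_pow]; congr 1; ring
      have h2 : (1-η^2)^m ≤ 1 := by
        apply pow_le_one₀ <;> nlinarith
      have h3 : (1+η)^m * (1 - ε/2) ≤ 1 := by
        calc (1+η)^m * (1 - ε/2) ≤ (1+η)^m * (1-η)^m := by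
              apply mul_le_mul_of_nonneg_left hbern (by positivity)
          _ ≤ 1 := h1 ▸ h2
      nlinarith [h3, hhalf]
    constructor
    · calc (1 - 2*ε) * μ i ≤ (1 - ε/2) * μ i := by nlinarith
        _ ≤ (1-η)^m * μ i := mul_le_mul_of_nonneg_right hbern hμinn
        _ ≤ μt i := hlow
    · calc μt i ≤ (1+η)^m * μ i := hhigh
        _ ≤ (1 + 2*ε) * μ i := mul_le_mul_of_nonneg_right hupper hμinn
  -- total sum
  have hsum : ∑ i, μt i = 1 := by
    have h : ∑ i : Fin (2^m), μt i = ∑ v ∈ range (2^m), ∏ l ∈ range m,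
        (if (v / 2^(m-(l+1))) % 2 = 0 then α l (v/2^(m-l)) else 1 - α l (v/2^(m-l))) := by
      rw [← Fin.sum_univ_eq_sum_range (fun v : ℕ => ∏ l ∈ range m,
        (if (v / 2^(m-(l+1))) % 2 = 0 then α l (v/2^(m-l)) else 1 - α l (v/2^(m-l)))) (2^m)]
      exact Finset.sum_congr rfl (fun i _ => hμt i)
    rw [h, aux_recon_sum α m]
  exact ⟨hsum, B, hB, hgood⟩
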